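/- Let c > 0. There exists a constant C = C(c) such that for every n ≥ 1, every probability space with a filtration (G_k)_{k=0,…,n}, every nonnegative martingale (M_k)_{k=0,…,n} with respect to (G_k) satisfying M_0 = 1 and |M_{k+1} − M_k| ≤ (c/√n) M_k almost surely, and all integers 0 ≤ k ≤ l ≤ n, one has E[(M_l − M_k)^4] ≤ C ((l − k)/n)². -/

import Mathlib

open scoped BigOperators
open MeasureTheory

lemma int_of_bound {Ω : Type} {m0 : MeasurableSpace Ω} {μ : Measure Ω} [IsFiniteMeasure μ]
    {f : Ω → ℝ} (hf : AEStronglyMeasurable f μ) (K : ℝ) (h : ∀ᵐ ω ∂μ, |f ω| ≤ K) :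
    Integrable f μ :=
  (integrable_const K).mono' hf (by simpa [Real.norm_eq_abs] using h)

lemma orth {Ω : Type} {m0 : MeasurableSpace Ω} {μ : Measure Ω} [IsProbabilityMeasure μ]
    {m : MeasurableSpace Ω} (hm : m ≤ m0) {f g : Ω → ℝ}
    (hf : StronglyMeasurable[m] f) (hg : Integrable g μ) (hfg : Integrable (f * g) μ)
    (hgc : μ[g|m] =ᵐ[μ] 0) : ∫ ω, f ω * g ω ∂μ = 0 := by
  have h1 : μ[f * g|m] =ᵐ[μ] f * μ[g|m] := condExp_mul_of_stronglyMeasurable_left hf hfg hg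
  have h2 : f * μ[g|m] =ᵐ[μ] (0 : Ω → ℝ) := hgc.mono fun ω h => by
    simp [Pi.mul_apply, h]
  calc ∫ ω, f ω * g ω ∂μ = ∫ ω, (f * g) ω ∂μ := rfl
    _ = ∫ ω, (μ[f * g|m]) ω ∂μ := (integral_condExp hm).symm
    _ = ∫ ω, (0 : Ω → ℝ) ω ∂μ := integral_congr_ae (h1.trans h2)
    _ = 0 := by simp

set_option maxHeartbeats 1000000 in
lemma step_bound {Ω : Type} {m0 : MeasurableSpace Ω} {μ : Measure Ω} [IsProbabilityMeasure μ]
    {m : MeasurableSpace Ω} (hm : m ≤ m0)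
    {Mj Mj1 N : Ω → ℝ} {ε R : ℝ} (hε : 0 < ε)
    (hMj : StronglyMeasurable[m] Mj) (hN : StronglyMeasurable[m] N)
    (hMj1 : AEStronglyMeasurable[m0] Mj1 μ)
    (hbMj : ∀ᵐ ω ∂μ, |Mj ω| ≤ R) (hbN : ∀ᵐ ω ∂μ, |N ω| ≤ R) (hbMj1 : ∀ᵐ ω ∂μ, |Mj1 ω| ≤ R)
    (hmart : μ[Mj1|m] =ᵐ[μ] Mj)
    (hstep : ∀ᵐ ω ∂μ, |Mj1 ω - Mj ω| ≤ ε * Mj ω) :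
    ∫ ω, (Mj1 ω - N ω)^4 ∂μ ≤
      ∫ ω, (Mj ω - N ω)^4 ∂μ + 6*ε^2 * ∫ ω, (Mj ω - N ω)^2 * (Mj ω)^2 ∂μ
        + 4*ε^3 * ∫ ω, |Mj ω - N ω| * (Mj ω)^3 ∂μ + ε^4 * ∫ ω, (Mj ω)^4 ∂μ := by
  set Y : Ω → ℝ := fun ω => Mj ω - N ω with hY
  set D : Ω → ℝ := fun ω => Mj1 ω - Mj ω with hD
  have haMj : AEStronglyMeasurable[m0] Mj μ := (hMj.mono hm).aestronglyMeasurable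
  have haN : AEStronglyMeasurable[m0] N μ := (hN.mono hm).aestronglyMeasurable
  have haY : AEStronglyMeasurable[m0] Y μ := haMj.sub haN
  have haD : AEStronglyMeasurable[m0] D μ := hMj1.sub haMj
  have hbY : ∀ᵐ ω ∂μ, |Y ω| ≤ 2*|R| := by
    filter_upwards [hbMj, hbN] with ω h1 h2
    calc |Y ω| ≤ |Mj ω| + |N ω| := abs_sub _ _
      _ ≤ 2*|R| := by have := le_abs_self R; linarith
  have hbD : ∀ᵐ ω ∂μ, |D ω| ≤ 2*|R| := by
    filter_upwards [hbMj, hbMj1] with ω h1 h2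
    calc |D ω| ≤ |Mj1 ω| + |Mj ω| := abs_sub _ _
      _ ≤ 2*|R| := by have := le_abs_self R; linarith
  have hbMj' : ∀ᵐ ω ∂μ, |Mj ω| ≤ |R| := hbMj.mono fun ω h => h.trans (le_abs_self R)
  have intYD : ∀ p q : ℕ, Integrable (fun ω => (Y ω)^p * (D ω)^q) μ := by
    intro p q
    refine int_of_bound ((haY.pow _).mul (haD.pow _)) ((2*|R|)^p * (2*|R|)^q) ?_
    filter_upwards [hbY, hbD] with ω h1 h2
    rw [abs_mul, abs_pow, abs_pow]
    exact mul_le_mul (pow_le_pow_left₀ (abs_nonneg _) h1 p)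
      (pow_le_pow_left₀ (abs_nonneg _) h2 q) (by positivity) (by positivity)
  have intYM : ∀ p q : ℕ, Integrable (fun ω => (Y ω)^p * (Mj ω)^q) μ := by
    intro p q
    refine int_of_bound ((haY.pow _).mul (haMj.pow _)) ((2*|R|)^p * |R|^q) ?_
    filter_upwards [hbY, hbMj'] with ω h1 h2
    rw [abs_mul, abs_pow, abs_pow]
    exact mul_le_mul (pow_le_pow_left₀ (abs_nonneg _) h1 p)
      (pow_le_pow_left₀ (abs_nonneg _) h2 q) (by positivity) (by positivity)
  have haAY : AEStronglyMeasurable[m0] (fun ω => |Y ω|) μ := haY.norm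
  have intAYM : Integrable (fun ω => |Y ω| * (Mj ω)^3) μ := by
    refine int_of_bound (haAY.mul (haMj.pow _)) ((2*|R|) * |R|^3) ?_
    filter_upwards [hbY, hbMj'] with ω h1 h2
    rw [abs_mul, abs_abs, abs_pow]
    exact mul_le_mul h1 (pow_le_pow_left₀ (abs_nonneg _) h2 3) (by positivity) (by positivity)
  have intM4 : Integrable (fun ω => (Mj ω)^4) μ := by
    have := intYM 0 4; simpa using this
  have intMj : Integrable Mj μ := int_of_bound haMj R hbMj
  have intMj1 : Integrable Mj1 μ := int_of_bound hMj1 R hbMj1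
  -- expansion
  have expand : ∫ ω, (Mj1 ω - N ω)^4 ∂μ =
      ∫ ω, (Y ω)^4 ∂μ + 4 * ∫ ω, (Y ω)^3 * (D ω) ∂μ + 6 * ∫ ω, (Y ω)^2 * (D ω)^2 ∂μ
        + 4 * ∫ ω, (Y ω) * (D ω)^3 ∂μ + ∫ ω, (D ω)^4 ∂μ := by
    have e1 : ∀ ω, (Mj1 ω - N ω)^4 =
        (Y ω)^4 + (4*((Y ω)^3 * D ω) + (6*((Y ω)^2 * (D ω)^2)
          + (4*((Y ω) * (D ω)^3) + (D ω)^4))) := by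
      intro ω; simp only [hY, hD]; ring
    rw [integral_congr_ae (Filter.Eventually.of_forall e1)]
    have i1 := intYD 4 0; simp only [pow_zero, mul_one] at i1
    have i5 := intYD 0 4; simp only [pow_zero, one_mul] at i5
    have i2 := (intYD 3 1).const_mul 4; simp only [pow_one] at i2
    have i3 := (intYD 2 2).const_mul 6
    have i4' := intYD 1 3; simp only [pow_one] at i4'
    have i4 := i4'.const_mul 4
    have h1 : ∫ a, ((Y a)^4 + (4*((Y a)^3 * D a) + (6*((Y a)^2 * (D a)^2)
          + (4*((Y a) * (D a)^3) + (D a)^4)))) ∂μ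
        = ∫ a, (Y a)^4 ∂μ + ∫ a, (4*((Y a)^3 * D a) + (6*((Y a)^2 * (D a)^2)
          + (4*((Y a) * (D a)^3) + (D a)^4))) ∂μ :=
      integral_add i1 (i2.add (i3.add (i4.add i5)))
    have h2 : ∫ a, (4*((Y a)^3 * D a) + (6*((Y a)^2 * (D a)^2)
          + (4*((Y a) * (D a)^3) + (D a)^4))) ∂μ
        = ∫ a, 4*((Y a)^3 * D a) ∂μ + ∫ a, (6*((Y a)^2 * (D a)^2)
          + (4*((Y a) * (D a)^3) + (D a)^4)) ∂μ :=
      integral_add i2 (i3.add (i4.add i5))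
    have h3 : ∫ a, (6*((Y a)^2 * (D a)^2) + (4*((Y a) * (D a)^3) + (D a)^4)) ∂μ
        = ∫ a, 6*((Y a)^2 * (D a)^2) ∂μ + ∫ a, (4*((Y a) * (D a)^3) + (D a)^4) ∂μ :=
      integral_add i3 (i4.add i5)
    have h4 : ∫ a, (4*((Y a) * (D a)^3) + (D a)^4) ∂μ
        = ∫ a, 4*((Y a) * (D a)^3) ∂μ + ∫ a, (D a)^4 ∂μ :=
      integral_add i4 i5
    rw [h1, h2, h3, h4, integral_const_mul, integral_const_mul, integral_const_mul]
    ring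
  -- the martingale term vanishes
  have hz : ∫ ω, (Y ω)^3 * (D ω) ∂μ = 0 := by
    have hcd : μ[D|m] =ᵐ[μ] (0 : Ω → ℝ) := by
      have h1 : μ[D|m] =ᵐ[μ] μ[Mj1|m] - μ[Mj|m] := condExp_sub intMj1 intMj m
      rw [condExp_of_stronglyMeasurable hm hMj intMj] at h1
      filter_upwards [h1, hmart] with ω ha hb
      simp [ha, Pi.sub_apply, hb]
    have i2 := intYD 3 1; simp only [pow_one] at i2
    exact orth hm ((hMj.sub hN).pow 3) (intMj1.sub intMj) i2 hcd
  -- term bounds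
  have hT2 : ∫ ω, (Y ω)^2 * (D ω)^2 ∂μ ≤ ε^2 * ∫ ω, (Y ω)^2 * (Mj ω)^2 ∂μ := by
    rw [← integral_const_mul]
    refine integral_mono_ae (intYD 2 2) ((intYM 2 2).const_mul _) ?_
    filter_upwards [hstep] with ω h
    have h2 : |D ω|^2 ≤ (ε * Mj ω)^2 := pow_le_pow_left₀ (abs_nonneg _) h 2
    rw [sq_abs] at h2
    calc (Y ω)^2 * (D ω)^2 ≤ (Y ω)^2 * (ε * Mj ω)^2 :=
        mul_le_mul_of_nonneg_left h2 (sq_nonneg _)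
      _ = ε^2 * ((Y ω)^2 * (Mj ω)^2) := by ring
  have hT3 : ∫ ω, (Y ω) * (D ω)^3 ∂μ ≤ ε^3 * ∫ ω, |Y ω| * (Mj ω)^3 ∂μ := by
    rw [← integral_const_mul]
    have i13 := intYD 1 3; simp only [pow_one] at i13
    refine integral_mono_ae i13 (intAYM.const_mul _) ?_
    filter_upwards [hstep] with ω h
    have h1 : Y ω * (D ω)^3 ≤ |Y ω| * |D ω|^3 := by
      calc Y ω * (D ω)^3 ≤ |Y ω * (D ω)^3| := le_abs_self _
        _ = |Y ω| * |D ω|^3 := by rw [abs_mul, abs_pow]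
    have h2 : |D ω|^3 ≤ (ε * Mj ω)^3 := pow_le_pow_left₀ (abs_nonneg _) h 3
    calc Y ω * (D ω)^3 ≤ |Y ω| * (ε * Mj ω)^3 :=
        h1.trans (mul_le_mul_of_nonneg_left h2 (abs_nonneg _))
      _ = ε^3 * (|Y ω| * (Mj ω)^3) := by ring
  have hT4 : ∫ ω, (D ω)^4 ∂μ ≤ ε^4 * ∫ ω, (Mj ω)^4 ∂μ := by
    rw [← integral_const_mul]
    have i5 := intYD 0 4; simp only [pow_zero, one_mul] at i5
    refine integral_mono_ae i5 (intM4.const_mul _) ?_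
    filter_upwards [hstep] with ω h
    have h2 : |D ω|^4 ≤ (ε * Mj ω)^4 := pow_le_pow_left₀ (abs_nonneg _) h 4
    calc (D ω)^4 ≤ |(D ω)^4| := le_abs_self _
      _ = |D ω|^4 := by rw [abs_pow]
      _ ≤ (ε * Mj ω)^4 := h2
      _ = ε^4 * (Mj ω)^4 := by ring
  rw [expand, hz]
  have e2 : ∫ ω, (Mj ω - N ω)^4 ∂μ = ∫ ω, (Y ω)^4 ∂μ := rfl
  rw [e2]
  nlinarith [hT2, hT3, hT4]

lemma amgm (t u v : ℝ) (ht : 0 < t) : u * v ≤ (u^2/t + t*v^2)/2 := by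
  have h2 : u*v ≤ (u^2 + t^2*v^2)/(2*t) := by
    rw [le_div_iff₀ (by positivity)]
    nlinarith [sq_nonneg (u - t*v)]
  calc u*v ≤ (u^2 + t^2*v^2)/(2*t) := h2
    _ = (u^2/t + t*v^2)/2 := by field_simp

lemma int_prod_le {Ω : Type} {m0 : MeasurableSpace Ω} {μ : Measure Ω}
    {u v : Ω → ℝ} (t : ℝ) (ht : 0 < t)
    (hu : Integrable (fun ω => (u ω)^2) μ) (hv : Integrable (fun ω => (v ω)^2) μ)
    (huv : Integrable (fun ω => u ω * v ω) μ) :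
    ∫ ω, u ω * v ω ∂μ ≤ ((∫ ω, (u ω)^2 ∂μ)/t + t * ∫ ω, (v ω)^2 ∂μ)/2 := by
  have h1 : ∫ ω, u ω * v ω ∂μ ≤ ∫ ω, ((u ω)^2/t + t*(v ω)^2)/2 ∂μ :=
    integral_mono huv (((hu.div_const t).add (hv.const_mul t)).div_const 2)
      (fun ω => amgm t (u ω) (v ω) ht)
  have h2 : ∫ ω, ((u ω)^2/t + t*(v ω)^2)/2 ∂μ
      = ((∫ ω, (u ω)^2 ∂μ)/t + t * ∫ ω, (v ω)^2 ∂μ)/2 := by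
    rw [integral_div, integral_add (hu.div_const t) (hv.const_mul t), integral_div,
      integral_const_mul]
  exact h1.trans (le_of_eq h2)

-- AM-GM for square roots : √(xy) ≤ (x+y)/2
lemma sqrt_amgm (x y : ℝ) (hx : 0 ≤ x) (hy : 0 ≤ y) : Real.sqrt (x*y) ≤ (x+y)/2 := by
  calc Real.sqrt (x*y) ≤ Real.sqrt (((x+y)/2)^2) := Real.sqrt_le_sqrt (by nlinarith [sq_nonneg (x-y)])
    _ = (x+y)/2 := Real.sqrt_sq (by positivity)
set_option maxHeartbeats 2000000 in
/-- the fourth-moment increment bound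
`E[(M_l - M_k)^4] ≤ C ((l-k)/n)²` for nonnegative discrete-time martingales with
relative step size `c/√n` (tightness estimate of Lemma 3.2). -/
theorem martingale_increment_fourth_moment_bound (c : ℝ) (hc : 0 < c) :
    ∃ C : ℝ, ∀ n : ℕ, 1 ≤ n →
      ∀ (Ω : Type) (m0 : MeasurableSpace Ω) (μ : Measure Ω),
        IsProbabilityMeasure μ →
        ∀ G : ℕ → MeasurableSpace Ω, (∀ k, G k ≤ m0) → Monotone G →
        ∀ M : ℕ → Ω → ℝ,
          (∀ k ≤ n, StronglyMeasurable[G k] (M k)) →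
          (∀ k ≤ n, Integrable (M k) μ) →
          (∀ k < n, μ[M (k + 1) | G k] =ᵐ[μ] M k) →
          (∀ᵐ ω ∂μ, M 0 ω = 1) →
          (∀ k ≤ n, ∀ᵐ ω ∂μ, 0 ≤ M k ω) →
          (∀ k < n, ∀ᵐ ω ∂μ, |M (k + 1) ω - M k ω| ≤ c / Real.sqrt n * M k ω) →
          ∀ k l : ℕ, k ≤ l → l ≤ n →
            ∫⁻ ω, ENNReal.ofReal ((M l ω - M k ω) ^ 4) ∂μ
              ≤ ENNReal.ofReal (C * (((l : ℝ) - (k : ℝ)) / n) ^ 2) := by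
  classical
  set K : ℝ := 6*c^2 + 4*c^3 + c^4 with hKdef
  set b : ℝ := Real.exp K with hbdef
  set c0 : ℝ := (6*c^2 + c^3) * Real.sqrt b + (c^3 + c^4) * b + 1 with hc0def
  have hK0 : 0 ≤ K := by rw [hKdef]; positivity
  have hb1 : (1:ℝ) ≤ b := Real.one_le_exp hK0
  have hb0 : (0:ℝ) < b := lt_of_lt_of_le one_pos hb1
  have hsb0 : 0 < Real.sqrt b := Real.sqrt_pos.2 hb0
  have hsb : Real.sqrt b * Real.sqrt b = b := Real.mul_self_sqrt hb0.le
  have hc01 : 1 ≤ c0 := by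
    rw [hc0def]; nlinarith [hsb0.le, hb0.le, sq_nonneg c, pow_pos hc 3, pow_pos hc 4]
  have hc00 : 0 < c0 := lt_of_lt_of_le one_pos hc01
  set S : ℝ := c0 * Real.sqrt b with hSdef
  have hS0 : 0 < S := by positivity
  have hX0 : (0:ℝ) ≤ (6*c^2+c^3)*Real.sqrt b := by positivity
  have hY0 : (0:ℝ) ≤ (c^3+c^4)*b := by positivity
  have h1c : (6*c^2 + c^3) * Real.sqrt b ≤ c0 := by rw [hc0def]; linarith
  have h2c : c^3 * Real.sqrt b ≤ (6*c^2 + c^3) * Real.sqrt b := by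
    nlinarith [hsb0.le, sq_nonneg c]
  have hα : 6*c^2*S + c^3*(S+b) ≤ 2*c0^2 := by
    have hA : c0 * ((6*c^2+c^3)*Real.sqrt b) ≤ c0 * c0 :=
      mul_le_mul_of_nonneg_left h1c hc00.le
    have hcb : c^3 * b ≤ c0 := by rw [hc0def]; nlinarith [hsb0.le, pow_pos hc 4, hb0.le]
    rw [hSdef]
    nlinarith [sq_nonneg (c0 - 1)]
  have hβ : c^3*(S+b) + c^4*b ≤ c0^2 := by
    have hA2 : c0 * (c^3*Real.sqrt b) ≤ c0 * ((6*c^2+c^3)*Real.sqrt b) :=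
      mul_le_mul_of_nonneg_left h2c hc00.le
    have hYc : (c^3+c^4)*b ≤ c0 * ((c^3+c^4)*b) := le_mul_of_one_le_left hY0 hc01
    have hc0sq : c0^2 = c0 * ((6*c^2+c^3)*Real.sqrt b) + c0 * ((c^3+c^4)*b) + c0 := by
      rw [hc0def]; ring
    rw [hSdef]
    nlinarith [hc00.le]
  have hc4b : c^4*b ≤ c0^2 := by
    have : (c^3+c^4)*b ≤ c0 := by rw [hc0def]; linarith
    nlinarith [sq_nonneg (c0-1), pow_pos hc 3, hb0.le]
  refine ⟨c0^2, ?_⟩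
  intro n hn Ω m0 μ hPM G hG hGmono M hSM hInt hmart hM0 hMpos hMstep k l hkl hln
  haveI := hPM
  have hn0 : (0:ℝ) < n := by exact_mod_cast Nat.lt_of_lt_of_le Nat.zero_lt_one hn
  have hn1 : (1:ℝ) ≤ n := by exact_mod_cast hn
  set s : ℝ := Real.sqrt n with hsdef
  have hs0 : 0 < s := Real.sqrt_pos.2 hn0
  have hs1 : 1 ≤ s := by
    rw [hsdef, show (1:ℝ) = Real.sqrt 1 by simp]
    exact Real.sqrt_le_sqrt hn1
  have hss : s * s = n := Real.mul_self_sqrt hn0.le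
  set ε : ℝ := c / s with hεdef
  have hε : 0 < ε := div_pos hc hs0
  have hεc : ε ≤ c := div_le_self hc.le hs1
  have hε2 : ε^2 = c^2 / n := by
    rw [hεdef, div_pow]; congr 1; rw [← hss]; ring
  have hε3 : ε^3 = c^3 / (n * s) := by
    rw [hεdef, div_pow]; congr 1; rw [← hss]; ring
  have hε4 : ε^4 = c^4 / n^2 := by
    rw [hεdef, div_pow]; congr 1; rw [← hss]; ring
  have hε3' : ε^3 ≤ c^3 / n := by
    rw [hε3]; gcongr c^3 / ?_ <;> nlinarith
  -- a.e. bounds on M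
  set R : ℝ := (1+c)^n with hRdef
  have hR1 : (1:ℝ) ≤ R := one_le_pow₀ (by linarith)
  have hbd : ∀ j, j ≤ n → ∀ᵐ ω ∂μ, M j ω ≤ (1+c)^j := by
    intro j
    induction j with
    | zero =>
      intro _
      filter_upwards [hM0] with ω h
      rw [h]; norm_num
    | succ j ih =>
      intro hj
      have hjn : j ≤ n := Nat.le_of_succ_le hj
      have hjlt : j < n := hj
      filter_upwards [ih hjn, hMstep j hjlt, hMpos j hjn] with ω h1 h2 h3
      have h4 : M (j+1) ω ≤ M j ω + ε * M j ω := by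
        have h5 := le_abs_self (M (j+1) ω - M j ω)
        linarith
      calc M (j+1) ω ≤ (1+ε) * M j ω := by linarith
        _ ≤ (1+c) * (1+c)^j := by
            apply mul_le_mul (by linarith) h1 h3 (by linarith)
        _ = (1+c)^(j+1) := by ring
  have habs : ∀ j, j ≤ n → ∀ᵐ ω ∂μ, |M j ω| ≤ R := by
    intro j hj
    filter_upwards [hbd j hj, hMpos j hj] with ω h1 h2
    rw [abs_of_nonneg h2]
    refine h1.trans ?_
    rw [hRdef]
    exact pow_le_pow_right₀ (by linarith) hj
  have haSM : ∀ j, j ≤ n → AEStronglyMeasurable (M j) μ := fun j hj =>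
    ((hSM j hj).mono (hG j)).aestronglyMeasurable
  -- integrability helper for products of two powers
  have intpp : ∀ (f g : Ω → ℝ) (p q : ℕ), AEStronglyMeasurable f μ → AEStronglyMeasurable g μ →
      (∀ᵐ ω ∂μ, |f ω| ≤ 2*R) → (∀ᵐ ω ∂μ, |g ω| ≤ 2*R) →
      Integrable (fun ω => (f ω)^p * (g ω)^q) μ := by
    intro f g p q hf hg hbf hbg
    refine int_of_bound ((hf.pow _).mul (hg.pow _)) ((2*R)^p * (2*R)^q) ?_
    filter_upwards [hbf, hbg] with ω h1 h2
    rw [abs_mul, abs_pow, abs_pow]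
    exact mul_le_mul (pow_le_pow_left₀ (abs_nonneg _) h1 p)
      (pow_le_pow_left₀ (abs_nonneg _) h2 q) (by positivity) (by positivity)
  have habs2 : ∀ j, j ≤ n → ∀ᵐ ω ∂μ, |M j ω| ≤ 2*R := fun j hj =>
    (habs j hj).mono fun ω h => h.trans (by linarith)
  have habsY : ∀ j, j ≤ n → ∀ᵐ ω ∂μ, |M j ω - M k ω| ≤ 2*R := by
    intro j hj
    filter_upwards [habs j hj, habs k (hkl.trans hln)] with ω h1 h2
    calc |M j ω - M k ω| ≤ |M j ω| + |M k ω| := abs_sub _ _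
      _ ≤ 2*R := by linarith
  have haY : ∀ j, j ≤ n → AEStronglyMeasurable (fun ω => M j ω - M k ω) μ := fun j hj =>
    (haSM j hj).sub (haSM k (hkl.trans hln))
  have intM4 : ∀ j, j ≤ n → Integrable (fun ω => (M j ω)^4) μ := by
    intro j hj
    have := intpp (M j) (M j) 2 2 (haSM j hj) (haSM j hj) (habs2 j hj) (habs2 j hj)
    exact this.congr (Filter.Eventually.of_forall fun ω => by ring)
  have hm4nn : ∀ j, 0 ≤ ∫ ω, (M j ω)^4 ∂μ := fun j =>
    integral_nonneg fun ω => by positivity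
  -- the one-step inequality
  have main_step : ∀ j, j < n → ∀ N : Ω → ℝ, StronglyMeasurable[G j] N →
      (∀ᵐ ω ∂μ, |N ω| ≤ R) →
      ∫ ω, (M (j+1) ω - N ω)^4 ∂μ ≤ ∫ ω, (M j ω - N ω)^4 ∂μ
        + 6*ε^2 * ∫ ω, (M j ω - N ω)^2 * (M j ω)^2 ∂μ
        + 4*ε^3 * ∫ ω, |M j ω - N ω| * (M j ω)^3 ∂μ
        + ε^4 * ∫ ω, (M j ω)^4 ∂μ := by
    intro j hj N hN hbN
    exact step_bound (hG j) hε (hSM j hj.le) hN (haSM (j+1) hj) (habs j hj.le) hbN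
      (habs (j+1) hj) (hmart j hj) (hMstep j hj)
  -- fourth moment bound
  have hmom : ∀ j, j ≤ n → ∫ ω, (M j ω)^4 ∂μ ≤ (1 + K/n)^j := by
    intro j
    induction j with
    | zero =>
      intro _
      have e : ∫ ω, (M 0 ω)^4 ∂μ = ∫ ω, (1:ℝ) ∂μ :=
        integral_congr_ae (hM0.mono fun ω h => by simp [h])
      rw [e]; simp
    | succ j ih =>
      intro hj
      have hjn : j ≤ n := Nat.le_of_succ_le hj
      have hjlt : j < n := hj
      have hstep := main_step j hjlt (fun _ => (0:ℝ)) stronglyMeasurable_const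
        (Filter.Eventually.of_forall fun ω => by simp; linarith)
      simp only [sub_zero] at hstep
      have e1 : ∫ ω, (M j ω)^2 * (M j ω)^2 ∂μ = ∫ ω, (M j ω)^4 ∂μ :=
        integral_congr_ae (Filter.Eventually.of_forall fun ω => by ring)
      have e2 : ∫ ω, |M j ω| * (M j ω)^3 ∂μ = ∫ ω, (M j ω)^4 ∂μ :=
        integral_congr_ae ((hMpos j hjn).mono fun ω h => by
          show |M j ω| * (M j ω)^3 = (M j ω)^4
          rw [abs_of_nonneg h]; ring)
      rw [e1, e2] at hstep
      have hij := ih hjn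
      have hnn := hm4nn j
      have h4 : ε^4 ≤ c^4/n := by
        have hnn2 : (n:ℝ)*1 ≤ n*n := mul_le_mul_of_nonneg_left hn1 hn0.le
        rw [hε4]; gcongr c^4 / ?_
        linarith [hnn2]
      have hKn : K/(n:ℝ) = 6*(c^2/n) + 4*(c^3/n) + c^4/n := by rw [hKdef]; ring
      have hcoef : 6*ε^2 + 4*ε^3 + ε^4 ≤ K/n := by
        rw [hKn]; linarith [hε3', h4, hε2.le, hε2.ge]
      have hbase0 : (0:ℝ) ≤ 1 + K/n := by positivity
      calc ∫ ω, (M (j+1) ω)^4 ∂μ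
          ≤ ∫ ω, (M j ω)^4 ∂μ + 6*ε^2 * ∫ ω, (M j ω)^4 ∂μ
            + 4*ε^3 * ∫ ω, (M j ω)^4 ∂μ + ε^4 * ∫ ω, (M j ω)^4 ∂μ := hstep
        _ = (1 + (6*ε^2 + 4*ε^3 + ε^4)) * ∫ ω, (M j ω)^4 ∂μ := by ring
        _ ≤ (1 + K/n) * (1 + K/n)^j := by
            apply mul_le_mul (by linarith) hij hnn hbase0
        _ = (1 + K/n)^(j+1) := by ring
  have hKn0 : (0:ℝ) ≤ K/n := div_nonneg hK0 hn0.le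
  have hmomb : ∀ j, j ≤ n → ∫ ω, (M j ω)^4 ∂μ ≤ b := by
    intro j hj
    refine (hmom j hj).trans ?_
    have h1 : (1 + K/n : ℝ)^j ≤ (1 + K/n)^n :=
      pow_le_pow_right₀ (by linarith) hj
    have h2 : (1 + K/n : ℝ)^n ≤ (Real.exp (K/n))^n :=
      pow_le_pow_left₀ (by linarith) (by linarith [Real.add_one_le_exp (K/n)]) n
    have h3 : (Real.exp (K/n))^n = b := by
      rw [hbdef, ← Real.exp_nat_mul]
      congr 1
      field_simp
    linarith
  -- main induction
  have hkn : k ≤ n := hkl.trans hln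
  have key : ∀ j, k ≤ j → j ≤ n →
      ∫ ω, (M j ω - M k ω)^4 ∂μ ≤ c0^2 * (((j:ℝ) - (k:ℝ))/n)^2 := by
    intro j hkj
    induction j, hkj using Nat.le_induction with
    | base => intro _; simp
    | succ j hkj IH =>
      intro hj1n
      have hjn : j ≤ n := Nat.le_of_succ_le hj1n
      have hjlt : j < n := hj1n
      have hstep := main_step j hjlt (M k) ((hSM k hkn).mono (hGmono hkj)) (habs k hkn)
      have hAj := IH hjn
      have hBj := hmomb j hjn
      set f : ℝ := ((j:ℝ) - (k:ℝ))/n with hfdef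
      have hf0 : 0 ≤ f := by
        apply div_nonneg _ hn0.le
        have : (k:ℝ) ≤ (j:ℝ) := by exact_mod_cast hkj
        linarith
      have hfs : (((j+1:ℕ):ℝ) - (k:ℝ))/n = f + 1/n := by
        rw [hfdef]; push_cast; ring
      rw [hfs]
      by_cases hjk : j = k
      · subst hjk
        have hz4 : ∫ ω, (M j ω - M j ω)^4 ∂μ = 0 := by simp
        have hzQ : ∫ ω, (M j ω - M j ω)^2 * (M j ω)^2 ∂μ = 0 := by simp
        have hzT : ∫ ω, |M j ω - M j ω| * (M j ω)^3 ∂μ = 0 := by simp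
        rw [hz4, hzQ, hzT] at hstep
        have hf00 : f = 0 := by rw [hfdef]; simp
        have hB4 : ε^4 * ∫ ω, (M j ω)^4 ∂μ ≤ ε^4 * b :=
          mul_le_mul_of_nonneg_left hBj (by positivity)
        rw [hf00]
        have hεb : ε^4 * b = (c^4*b)/n^2 := by rw [hε4]; ring
        have hgoal : (c^4*b)/n^2 ≤ c0^2 * (0 + 1/(n:ℝ))^2 := by
          have e : c0^2 * (0 + 1/(n:ℝ))^2 = c0^2/n^2 := by field_simp; ring
          rw [e]
          gcongr
        linarith [hstep, hB4, hεb.le, hεb.ge, hgoal]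
      · -- j > k, so f ≥ 1/n > 0
        have hkj' : k < j := lt_of_le_of_ne hkj fun h => hjk h.symm
        have hfpos : 0 < f := by
          rw [hfdef]
          apply div_pos _ hn0
          have : (k:ℝ) + 1 ≤ (j:ℝ) := by exact_mod_cast hkj'
          linarith
        have hsf0 : 0 < Real.sqrt f := Real.sqrt_pos.2 hfpos
        -- integrability
        have iQ : Integrable (fun ω => (M j ω - M k ω)^2 * (M j ω)^2) μ :=
          intpp _ _ 2 2 (haY j hjn) (haSM j hjn) (habsY j hjn) (habs2 j hjn)
        have iY4 : Integrable (fun ω => ((M j ω - M k ω)^2)^2) μ :=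
          (intpp _ _ 2 2 (haY j hjn) (haY j hjn) (habsY j hjn) (habsY j hjn)).congr
            (Filter.Eventually.of_forall fun ω => by ring)
        have iM4' : Integrable (fun ω => ((M j ω)^2)^2) μ :=
          (intM4 j hjn).congr (Filter.Eventually.of_forall fun ω => by ring)
        have iT : Integrable (fun ω => |M j ω - M k ω| * (M j ω)^3) μ := by
          refine int_of_bound ((haY j hjn).norm.mul ((haSM j hjn).pow 3)) ((2*R) * (2*R)^3) ?_
          filter_upwards [habsY j hjn, habs2 j hjn] with ω h1 h2
          rw [abs_mul, abs_abs, abs_pow]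
          exact mul_le_mul h1 (pow_le_pow_left₀ (abs_nonneg _) h2 3) (by positivity)
            (by positivity)
        have iU2 : Integrable (fun ω => (|M j ω - M k ω| * M j ω)^2) μ :=
          iQ.congr (Filter.Eventually.of_forall fun ω => by simp [mul_pow, sq_abs])
        have iUV : Integrable (fun ω => (|M j ω - M k ω| * M j ω) * (M j ω)^2) μ :=
          iT.congr (Filter.Eventually.of_forall fun ω => by ring)
        -- quadratic term bound via AM-GM
        set t : ℝ := f * c0 / Real.sqrt b with htdef
        have ht0 : 0 < t := by positivity
        have hQ1 : ∫ ω, (M j ω - M k ω)^2 * (M j ω)^2 ∂μ ≤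
            ((∫ ω, ((M j ω - M k ω)^2)^2 ∂μ)/t + t * ∫ ω, ((M j ω)^2)^2 ∂μ)/2 :=
          int_prod_le t ht0 iY4 iM4' iQ
        have eY : ∫ ω, ((M j ω - M k ω)^2)^2 ∂μ = ∫ ω, (M j ω - M k ω)^4 ∂μ :=
          integral_congr_ae (Filter.Eventually.of_forall fun ω => by ring)
        have eM : ∫ ω, ((M j ω)^2)^2 ∂μ = ∫ ω, (M j ω)^4 ∂μ :=
          integral_congr_ae (Filter.Eventually.of_forall fun ω => by ring)
        rw [eY, eM] at hQ1
        have hcomp : ((c0^2*f^2)/t + t*b)/2 = S*f := by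
          rw [hSdef, htdef]
          generalize hq : Real.sqrt b = q at hsb ⊢
          rw [← hsb]
          have hq0 : q ≠ 0 := by rw [← hq]; exact hsb0.ne'
          field_simp
          ring
        have hQ2 : ∫ ω, (M j ω - M k ω)^2 * (M j ω)^2 ∂μ ≤ S*f := by
          refine hQ1.trans ?_
          rw [← hcomp]
          have hd : (∫ ω, (M j ω - M k ω)^4 ∂μ)/t ≤ (c0^2*f^2)/t := by gcongr
          have hm : t * ∫ ω, (M j ω)^4 ∂μ ≤ t * b := mul_le_mul_of_nonneg_left hBj ht0.le
          linarith
        -- cubic term bound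
        have hT1 : ∫ ω, (|M j ω - M k ω| * M j ω) * (M j ω)^2 ∂μ ≤
            ((∫ ω, (|M j ω - M k ω| * M j ω)^2 ∂μ)/Real.sqrt f
              + Real.sqrt f * ∫ ω, ((M j ω)^2)^2 ∂μ)/2 :=
          int_prod_le (Real.sqrt f) hsf0 iU2 iM4' iUV
        have eT : ∫ ω, (|M j ω - M k ω| * M j ω) * (M j ω)^2 ∂μ
            = ∫ ω, |M j ω - M k ω| * (M j ω)^3 ∂μ :=
          integral_congr_ae (Filter.Eventually.of_forall fun ω => by ring)
        have eU : ∫ ω, (|M j ω - M k ω| * M j ω)^2 ∂μ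
            = ∫ ω, (M j ω - M k ω)^2 * (M j ω)^2 ∂μ :=
          integral_congr_ae (Filter.Eventually.of_forall fun ω => by simp [mul_pow, sq_abs])
        rw [eT, eU, eM] at hT1
        have hfsq : f / Real.sqrt f = Real.sqrt f := Real.div_sqrt
        have hT2 : ∫ ω, |M j ω - M k ω| * (M j ω)^3 ∂μ ≤ Real.sqrt f * (S+b)/2 := by
          have hd : (∫ ω, (M j ω - M k ω)^2 * (M j ω)^2 ∂μ)/Real.sqrt f ≤ (S*f)/Real.sqrt f := by
            gcongr
          have hm : Real.sqrt f * ∫ ω, (M j ω)^4 ∂μ ≤ Real.sqrt f * b :=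
            mul_le_mul_of_nonneg_left hBj hsf0.le
          have he : (S*f)/Real.sqrt f = S * Real.sqrt f := by
            rw [mul_div_assoc, hfsq]
          have : ((∫ ω, (M j ω - M k ω)^2 * (M j ω)^2 ∂μ)/Real.sqrt f
              + Real.sqrt f * ∫ ω, (M j ω)^4 ∂μ)/2
              ≤ (S * Real.sqrt f + Real.sqrt f * b)/2 := by
            rw [← he]; linarith
          refine hT1.trans (this.trans (le_of_eq ?_))
          ring
        -- √f / s ≤ (f + 1/n)/2
        have hsfs : Real.sqrt f / s ≤ (f + 1/n)/2 := by
          have e1 : Real.sqrt (f/(n:ℝ)) = Real.sqrt f / s := by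
            rw [hsdef]; exact Real.sqrt_div hf0 n
          have e2 : f/(n:ℝ) = f * (1/n) := by ring
          rw [← e1, e2]
          exact sqrt_amgm f (1/n) hf0 (by positivity)
        have hefs : ε^3 * Real.sqrt f ≤ (c^3/n) * ((f+1/n)/2) := by
          rw [hε3]
          have e : c^3/((n:ℝ)*s) * Real.sqrt f = (c^3/n) * (Real.sqrt f / s) := by
            field_simp
          rw [e]
          exact mul_le_mul_of_nonneg_left hsfs (by positivity)
        -- assemble
        have h6 : 6*ε^2 * ∫ ω, (M j ω - M k ω)^2 * (M j ω)^2 ∂μ ≤ 6*(c^2/n) * (S*f) := by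
          calc 6*ε^2 * ∫ ω, (M j ω - M k ω)^2 * (M j ω)^2 ∂μ ≤ 6*ε^2*(S*f) :=
              mul_le_mul_of_nonneg_left hQ2 (by positivity)
            _ = 6*(c^2/n)*(S*f) := by rw [hε2]
        have h4a : 4*ε^3 * ∫ ω, |M j ω - M k ω| * (M j ω)^3 ∂μ
            ≤ 2*(ε^3 * Real.sqrt f)*(S+b) := by
          have h := mul_le_mul_of_nonneg_left hT2 (show (0:ℝ) ≤ 4*ε^3 by positivity)
          have he : 4*ε^3*(Real.sqrt f * (S+b)/2) = 2*(ε^3 * Real.sqrt f)*(S+b) := by ring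
          linarith [h, he.le, he.ge]
        have h4b : 2*(ε^3 * Real.sqrt f)*(S+b) ≤ 2*((c^3/n) * ((f+1/n)/2))*(S+b) := by
          calc 2*(ε^3 * Real.sqrt f)*(S+b) = (ε^3 * Real.sqrt f)*(2*(S+b)) := by ring
            _ ≤ ((c^3/n) * ((f+1/n)/2))*(2*(S+b)) :=
              mul_le_mul_of_nonneg_right hefs (by positivity)
            _ = 2*((c^3/n)*((f+1/n)/2))*(S+b) := by ring
        have h8 : ε^4 * ∫ ω, (M j ω)^4 ∂μ ≤ (c^4/n^2)*b := by
          calc ε^4 * ∫ ω, (M j ω)^4 ∂μ ≤ ε^4 * b :=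
              mul_le_mul_of_nonneg_left hBj (by positivity)
            _ = (c^4/n^2)*b := by rw [hε4]
        have hν0 : (0:ℝ) < 1/n := by positivity
        have hfinal : c0^2*f^2 + 6*(c^2/n)*(S*f) + 2*((c^3/n)*((f+1/n)/2))*(S+b)
            + (c^4/n^2)*b ≤ c0^2*(f+1/n)^2 := by
          have e1 : 6*(c^2/n)*(S*f) = (6*c^2*S)*(f*(1/n)) := by field_simp
          have e2 : 2*((c^3/n)*((f+1/n)/2))*(S+b)
              = (c^3*(S+b))*(f*(1/n)) + (c^3*(S+b))*((1/n)*(1/n)) := by field_simp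
          have e3 : (c^4/n^2)*b = (c^4*b)*((1/n)*(1/n)) := by field_simp
          have e4 : c0^2*(f+1/n)^2
              = c0^2*f^2 + (2*c0^2)*(f*(1/n)) + c0^2*((1/n)*(1/n)) := by ring
          rw [e1, e2, e3, e4]
          have p1 : 0 ≤ (2*c0^2 - (6*c^2*S + c^3*(S+b))) * (f*(1/n)) :=
            mul_nonneg (by linarith [hα]) (mul_nonneg hf0 hν0.le)
          have p2 : 0 ≤ (c0^2 - (c^3*(S+b) + c^4*b)) * ((1/n)*(1/n)) :=
            mul_nonneg (by linarith [hβ]) (mul_nonneg hν0.le hν0.le)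
          linarith [p1, p2]
        calc ∫ ω, (M (j+1) ω - M k ω)^4 ∂μ
            ≤ ∫ ω, (M j ω - M k ω)^4 ∂μ
              + 6*ε^2 * ∫ ω, (M j ω - M k ω)^2 * (M j ω)^2 ∂μ
              + 4*ε^3 * ∫ ω, |M j ω - M k ω| * (M j ω)^3 ∂μ
              + ε^4 * ∫ ω, (M j ω)^4 ∂μ := hstep
          _ ≤ c0^2*f^2 + 6*(c^2/n)*(S*f) + 2*(ε^3 * Real.sqrt f)*(S+b) + (c^4/n^2)*b :=
              add_le_add (add_le_add (add_le_add hAj h6) h4a) h8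
          _ ≤ c0^2*f^2 + 6*(c^2/n)*(S*f) + 2*((c^3/n)*((f+1/n)/2))*(S+b) + (c^4/n^2)*b := by
              linarith [h4b]
          _ ≤ c0^2*(f+1/n)^2 := hfinal
  -- conclusion
  have hfin := key l hkl hln
  have hintl : Integrable (fun ω => (M l ω - M k ω)^4) μ :=
    (intpp _ _ 2 2 (haY l hln) (haY l hln) (habsY l hln) (habsY l hln)).congr
      (Filter.Eventually.of_forall fun ω => by ring)
  rw [← ofReal_integral_eq_lintegral_ofReal hintl
    (Filter.Eventually.of_forall fun ω => by positivity)]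
  exact ENNReal.ofReal_le_ofReal hfin
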